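/- If G is a finite connected bipartite graph, then n(G) ≤ gp(G\bar{G}) ≤ n(G) + 1. -/

import Mathlib

open SimpleGraph

variable {V : Type*}

/-- `v` lies on a geodesic (shortest path) between `u` and `w` in `G`. -/
def liesOnGeodesic (G : SimpleGraph V) (u v w : V) : Prop :=
  G.Reachable u w ∧ G.dist u v + G.dist v w = G.dist u w

/-- `S` is a general position set in `G`: no element of `S` lies on a geodesic
between two other elements of `S`. -/
def isGenPosSet (G : SimpleGraph V) (S : Set V) : Prop :=
  ∀ u ∈ S, ∀ v ∈ S, ∀ w ∈ S, u ≠ v → v ≠ w → u ≠ w → ¬ liesOnGeodesic G u v w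

/-- The general position number `gp(G)` of `G`. -/
noncomputable def gpNum (G : SimpleGraph V) : ℕ :=
  sSup {n : ℕ | ∃ S : Set V, isGenPosSet G S ∧ S.ncard = n}

/-- `S` is a `3`-general position set in `G`: no three vertices of `S` lie on a
common geodesic of length at most `3`. -/
def isGP3Set (G : SimpleGraph V) (S : Set V) : Prop :=
  ∀ u ∈ S, ∀ v ∈ S, ∀ w ∈ S, u ≠ v → v ≠ w → u ≠ w →
    ¬ (liesOnGeodesic G u v w ∧ G.dist u w ≤ 3)

/-- The `3`-general position number `gp₃(G)` of `G`. -/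
noncomputable def gp3Num (G : SimpleGraph V) : ℕ :=
  sSup {n : ℕ | ∃ S : Set V, isGP3Set G S ∧ S.ncard = n}

/-- The complementary prism `G\bar{G}`: the disjoint union of `G` (left copy) and
its complement `Gᶜ` (right copy), together with the perfect matching joining each
vertex to its copy. -/
def compPrism (G : SimpleGraph V) : SimpleGraph (V ⊕ V) where
  Adj x y :=
    match x, y with
    | Sum.inl a, Sum.inl b => G.Adj a b
    | Sum.inr a, Sum.inr b => Gᶜ.Adj a b
    | Sum.inl a, Sum.inr b => a = b
    | Sum.inr a, Sum.inl b => a = b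
  symm := by
    constructor
    rintro (a | a) (b | b) h
    · exact (G.adj_comm a b).mp h
    · exact Eq.symm h
    · exact Eq.symm h
    · exact (Gᶜ.adj_comm a b).mp h
  loopless := by
    constructor
    rintro (a | a) h
    · exact G.loopless.irrefl a h
    · exact Gᶜ.loopless.irrefl a h

/-- The eccentricity of a vertex: the maximum distance to another vertex. -/
noncomputable def ecc (G : SimpleGraph V) (v : V) : ℕ :=
  sSup (Set.range (G.dist v))

/-- The radius of a graph: the minimum eccentricity. -/
noncomputable def rad (G : SimpleGraph V) : ℕ :=
  sInf (Set.range (ecc G))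

/-- The diameter of a graph: the maximum distance between two vertices. -/
noncomputable def graphDiam (G : SimpleGraph V) : ℕ :=
  sSup {n : ℕ | ∃ u v : V, G.dist u v = n}

/-- `\bar{gp}₃(G)`: the maximum, over all `gp₃`-sets `S` of `G`, of the `3`-general
position number of the subgraph of `Gᶜ` induced by the vertices outside `S`. -/
noncomputable def barGp3 (G : SimpleGraph V) : ℕ :=
  sSup {n : ℕ | ∃ S : Set V, isGP3Set G S ∧ S.ncard = gp3Num G ∧
          gp3Num ((Gᶜ).induce Sᶜ) = n}

/-- A cut vertex: its removal disconnects the graph. -/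
def isCutVertex (G : SimpleGraph V) (v : V) : Prop :=
  ¬ (G.induce {u : V | u ≠ v}).Connected

/-- `B` is the vertex set of a `2`-connected subgraph of `G`:
it has at least `3` vertices and removing any one vertex leaves it connected. -/
def isTwoConnectedSet (G : SimpleGraph V) (B : Set V) : Prop :=
  3 ≤ B.ncard ∧ ∀ v ∈ B, (G.induce (B \ {v})).Connected

/-- A block graph: every maximal `2`-connected subgraph is a clique. -/
def isBlockGraph (G : SimpleGraph V) : Prop :=
  ∀ B : Set V, isTwoConnectedSet G B →
    (∀ B' : Set V, isTwoConnectedSet G B' → B ⊆ B' → B = B') →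
    G.IsClique B

/-- Complete multipartite graph: the vertices can be partitioned (via an
equivalence relation, whose classes are the parts) so that two vertices are
adjacent iff they lie in different parts. -/
def isCompleteMultipartite (G : SimpleGraph V) : Prop :=
  ∃ r : V → V → Prop, Equivalence r ∧ ∀ u v, G.Adj u v ↔ ¬ r u v

/-- The hypercube `Q_n`: binary strings of length `n`, two strings being
adjacent when they differ in exactly one coordinate. -/
def hypercube (n : ℕ) : SimpleGraph (Fin n → Bool) where
  Adj x y := {i : Fin n | x i ≠ y i}.ncard = 1
  symm := by
    constructor
    intro x y h
    simpa [ne_comm] using h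
  loopless := by
    constructor
    intro x
    simp

/-- The block graph `G_k`: a chain of `k+1` triangles `{vᵢ, uᵢ, vᵢ₊₁}`,
with the `v`-vertices `v₁, …, v_{k+2}` indexed by `Fin (k+2)` (left summand)
and the `u`-vertices `u₁, …, u_{k+1}` indexed by `Fin (k+1)` (right summand);
the edges are `vᵢvᵢ₊₁`, `uᵢvᵢ` and `uᵢvᵢ₊₁`. -/
def Gk (k : ℕ) : SimpleGraph (Fin (k + 2) ⊕ Fin (k + 1)) where
  Adj x y :=
    match x, y with
    | Sum.inl a, Sum.inl b => a.val + 1 = b.val ∨ b.val + 1 = a.val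
    | Sum.inl a, Sum.inr b => a.val = b.val ∨ a.val = b.val + 1
    | Sum.inr a, Sum.inl b => b.val = a.val ∨ b.val = a.val + 1
    | Sum.inr _, Sum.inr _ => False
  symm := by
    constructor
    rintro (a | a) (b | b) h
    · exact Or.symm h
    · exact h
    · exact h
    · exact h
  loopless := by
    constructor
    rintro (a | a) h
    · omega
    · exact h

section CompPrismHelpers

variable {W : Type*} (G : SimpleGraph W)

lemma compPrism_adj_inl_inl {a b : W} :
    (compPrism G).Adj (Sum.inl a) (Sum.inl b) ↔ G.Adj a b := Iff.rfl

lemma compPrism_adj_inr_inr {a b : W} :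
    (compPrism G).Adj (Sum.inr a) (Sum.inr b) ↔ Gᶜ.Adj a b := Iff.rfl

lemma compPrism_adj_inl_inr {a b : W} :
    (compPrism G).Adj (Sum.inl a) (Sum.inr b) ↔ a = b := Iff.rfl

lemma compPrism_connected (hG : G.Connected) : (compPrism G).Connected := by
  have hne : Nonempty W := hG.nonempty
  rw [connected_iff]
  refine ⟨?_, ⟨Sum.inl hne.some⟩⟩
  have key : ∀ x : W ⊕ W, (compPrism G).Reachable x (Sum.inl (x.elim id id)) := by
    rintro (a | a)
    · exact Reachable.refl _
    · exact Adj.reachable ((compPrism_adj_inl_inr G).mpr rfl).symm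
  intro x y
  have hxy : (compPrism G).Reachable (Sum.inl (x.elim id id)) (Sum.inl (y.elim id id)) :=
    Reachable.map ⟨Sum.inl, fun h => h⟩ (hG.preconnected (x.elim id id) (y.elim id id))
  exact ((key x).trans hxy).trans (key y).symm

lemma two_le_dist_of_ne_of_not_adj {H : SimpleGraph W} (h : H.Connected) {x y : W}
    (hne : x ≠ y) (hadj : ¬ H.Adj x y) : 2 ≤ H.dist x y := by
  have h0 := h.pos_dist_of_ne hne
  have h1 : H.dist x y ≠ 1 := fun h1 => hadj (SimpleGraph.dist_eq_one_iff_adj.mp h1)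
  omega

lemma dist_inl_inr (hG : G.Connected) {u v : W} (h : u ≠ v) :
    (compPrism G).dist (Sum.inl u) (Sum.inr v) = 2 := by
  have hc := compPrism_connected G hG
  have hle : (compPrism G).dist (Sum.inl u) (Sum.inr v) ≤ 2 := by
    by_cases hadj : G.Adj u v
    · simpa using SimpleGraph.dist_le
        (SimpleGraph.Walk.cons (show (compPrism G).Adj (Sum.inl u) (Sum.inl v) from hadj)
          (SimpleGraph.Walk.cons ((compPrism_adj_inl_inr G).mpr rfl) SimpleGraph.Walk.nil))
    · simpa using SimpleGraph.dist_le
        (SimpleGraph.Walk.cons ((compPrism_adj_inl_inr G).mpr rfl)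
          (SimpleGraph.Walk.cons
            ((compPrism_adj_inr_inr G).mpr ((G.compl_adj u v).mpr ⟨h, hadj⟩))
            SimpleGraph.Walk.nil))
  have hge := two_le_dist_of_ne_of_not_adj hc (by simp)
    (show ¬ (compPrism G).Adj (Sum.inl u) (Sum.inr v) by
      rw [compPrism_adj_inl_inr]; exact h)
  omega

lemma dist_inl_inl_le_three (hG : G.Connected) {u v : W} (h : u ≠ v) (hadj : ¬ G.Adj u v) :
    (compPrism G).dist (Sum.inl u) (Sum.inl v) ≤ 3 := by
  simpa using SimpleGraph.dist_le
    (SimpleGraph.Walk.cons ((compPrism_adj_inl_inr G).mpr rfl)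
      (SimpleGraph.Walk.cons ((compPrism_adj_inr_inr G).mpr ((G.compl_adj u v).mpr ⟨h, hadj⟩))
        (SimpleGraph.Walk.cons (((compPrism G).adj_comm _ _).mp ((compPrism_adj_inl_inr G).mpr rfl))
          SimpleGraph.Walk.nil)))

end CompPrismHelpers

/-- For a connected bipartite graph `G`: `n(G) ≤ gp(G\bar{G}) ≤ n(G) + 1`. -/
theorem gp_compPrism_bipartite_bounds {V : Type*} [Fintype V] (G : SimpleGraph V)
    (hG : G.Connected) (hbip : G.Colorable 2) :
    Fintype.card V ≤ gpNum (compPrism G) ∧ gpNum (compPrism G) ≤ Fintype.card V + 1 := by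
  classical
  obtain ⟨c⟩ := hbip
  have hc := compPrism_connected G hG
  have hbdd : BddAbove {n : ℕ | ∃ S : Set (V ⊕ V), isGenPosSet (compPrism G) S ∧ S.ncard = n} := by
    refine ⟨Nat.card (V ⊕ V), ?_⟩
    rintro n ⟨S, -, rfl⟩
    rw [← Set.ncard_univ]
    exact Set.ncard_le_ncard (Set.subset_univ _)
  constructor
  · -- lower bound
    set A : Set V := {v | c v = 0} with hA
    set B : Set V := {v | c v ≠ 0} with hB
    set S : Set (V ⊕ V) := Sum.inr '' A ∪ Sum.inl '' B with hSdef
    have hAB : ∀ a ∈ A, ∀ b ∈ B, a ≠ b := fun a ha b hbm h => hbm (h ▸ ha)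
    have hAadj : ∀ a ∈ A, ∀ a' ∈ A, ¬ G.Adj a a' := by
      intro a ha a' ha' hadj
      exact c.valid hadj (ha.trans ha'.symm)
    have fin2 : ∀ x : Fin 2, x = 0 ∨ x = 1 := by decide
    have hBadj : ∀ b ∈ B, ∀ b' ∈ B, ¬ G.Adj b b' := by
      intro b hbm b' hbm' hadj
      have h1 : c b = 1 := (fin2 (c b)).resolve_left hbm
      have h2 : c b' = 1 := (fin2 (c b')).resolve_left hbm'
      exact c.valid hadj (h1.trans h2.symm)
    -- distance facts
    have dRR : ∀ a ∈ A, ∀ a' ∈ A, a ≠ a' →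
        (compPrism G).dist (Sum.inr a) (Sum.inr a') = 1 := by
      intro a ha a' ha' hne
      exact SimpleGraph.dist_eq_one_iff_adj.mpr
        ((compPrism_adj_inr_inr G).mpr ((G.compl_adj a a').mpr ⟨hne, hAadj a ha a' ha'⟩))
    have dLR : ∀ u v : V, u ≠ v → (compPrism G).dist (Sum.inl u) (Sum.inr v) = 2 :=
      fun u v h => dist_inl_inr G hG h
    have dRL : ∀ u v : V, u ≠ v → (compPrism G).dist (Sum.inr v) (Sum.inl u) = 2 := by
      intro u v h
      rw [SimpleGraph.dist_comm]
      exact dLR u v h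
    have dLL_lo : ∀ b ∈ B, ∀ b' ∈ B, b ≠ b' →
        2 ≤ (compPrism G).dist (Sum.inl b) (Sum.inl b') := by
      intro b hbm b' hbm' hne
      exact two_le_dist_of_ne_of_not_adj hc (by simpa using hne)
        (show ¬ (compPrism G).Adj (Sum.inl b) (Sum.inl b') from hBadj b hbm b' hbm')
    have dLL_hi : ∀ b ∈ B, ∀ b' ∈ B, b ≠ b' →
        (compPrism G).dist (Sum.inl b) (Sum.inl b') ≤ 3 := by
      intro b hbm b' hbm' hne
      exact dist_inl_inl_le_three G hG hne (hBadj b hbm b' hbm')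
    have hgp : isGenPosSet (compPrism G) S := by
      rintro u hu v hv w hw huv hvw huw ⟨hreach, heq⟩
      rcases hu with ⟨a, ha, rfl⟩ | ⟨b, hbm, rfl⟩ <;>
        rcases hv with ⟨a', ha', rfl⟩ | ⟨b', hbm', rfl⟩ <;>
          rcases hw with ⟨a'', ha'', rfl⟩ | ⟨b'', hbm'', rfl⟩
      · -- R R R
        rw [dRR a ha a' ha' (by simpa using huv), dRR a' ha' a'' ha'' (by simpa using hvw),
          dRR a ha a'' ha'' (by simpa using huw)] at heq
        omega
      · -- R R L
        rw [dRR a ha a' ha' (by simpa using huv),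
          SimpleGraph.dist_comm, dLR b'' a' (hAB a' ha' b'' hbm'').symm,
          SimpleGraph.dist_comm, dLR b'' a (hAB a ha b'' hbm'').symm] at heq
        omega
      · -- R L R
        rw [dRL b' a (hAB a ha b' hbm').symm,
          dLR b' a'' (hAB a'' ha'' b' hbm').symm,
          dRR a ha a'' ha'' (by simpa using huw)] at heq
        omega
      · -- R L L
        have h1 := dLR b' a (hAB a ha b' hbm').symm
        have h2 := dLL_lo b' hbm' b'' hbm'' (by simpa using hvw)
        have h3 := dLR b'' a (hAB a ha b'' hbm'').symm
        rw [dRL b' a (hAB a ha b' hbm').symm,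
          dRL b'' a (hAB a ha b'' hbm'').symm] at heq
        omega
      · -- L R R
        rw [dLR b a' (hAB a' ha' b hbm).symm, dRR a' ha' a'' ha'' (by simpa using hvw),
          dLR b a'' (hAB a'' ha'' b hbm).symm] at heq
        omega
      · -- L R L
        have h3 := dLL_hi b hbm b'' hbm'' (by simpa using huw)
        rw [dLR b a' (hAB a' ha' b hbm).symm,
          dRL b'' a' (hAB a' ha' b'' hbm'').symm] at heq
        omega
      · -- L L R
        have h1 := dLL_lo b hbm b' hbm' (by simpa using huv)
        rw [dLR b' a'' (hAB a'' ha'' b' hbm').symm,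
          dLR b a'' (hAB a'' ha'' b hbm).symm] at heq
        omega
      · -- L L L
        have h1 := dLL_lo b hbm b' hbm' (by simpa using huv)
        have h2 := dLL_lo b' hbm' b'' hbm'' (by simpa using hvw)
        have h3 := dLL_hi b hbm b'' hbm'' (by simpa using huw)
        omega
    have hScard : S.ncard = Fintype.card V := by
      have hdisj : Disjoint (Sum.inr '' A : Set (V ⊕ V)) (Sum.inl '' B) := by
        rw [Set.disjoint_left]
        rintro x ⟨a, -, rfl⟩ ⟨b, -, hx⟩
        cases hx
      rw [hSdef, Set.ncard_union_eq hdisj,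
        Set.ncard_image_of_injective _ Sum.inr_injective,
        Set.ncard_image_of_injective _ Sum.inl_injective]
      have hcompl : B = Aᶜ := by
        ext v; simp [hA, hB]
      rw [hcompl, Set.ncard_add_ncard_compl, Nat.card_eq_fintype_card]
    exact le_csSup hbdd ⟨S, hgp, hScard⟩
  · -- upper bound
    refine csSup_le ⟨0, ∅, fun u hu => absurd hu (Set.notMem_empty u), by simp⟩ ?_
    rintro n ⟨S, hS, rfl⟩
    set SL : Set V := Sum.inl ⁻¹' S with hSL
    set SR : Set V := Sum.inr ⁻¹' S with hSR
    have hsub : (SL ∩ SR).Subsingleton := by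
      rintro u ⟨huL, huR⟩ v ⟨hvL, hvR⟩
      by_contra hne
      by_cases hadj : G.Adj u v
      · refine hS (Sum.inl u) huL (Sum.inl v) hvL (Sum.inr v) hvR
          (by simpa using hne) (by simp) (by simp) ?_
        refine ⟨hc.preconnected _ _, ?_⟩
        rw [SimpleGraph.dist_eq_one_iff_adj.mpr ((compPrism_adj_inl_inl G).mpr hadj),
          SimpleGraph.dist_eq_one_iff_adj.mpr ((compPrism_adj_inl_inr G).mpr rfl),
          dist_inl_inr G hG hne]
      · refine hS (Sum.inl u) huL (Sum.inr u) huR (Sum.inr v) hvR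
          (by simp) (by simpa using hne) (by simp) ?_
        refine ⟨hc.preconnected _ _, ?_⟩
        rw [SimpleGraph.dist_eq_one_iff_adj.mpr ((compPrism_adj_inl_inr G).mpr rfl),
          SimpleGraph.dist_eq_one_iff_adj.mpr
            ((compPrism_adj_inr_inr G).mpr ((G.compl_adj u v).mpr ⟨hne, hadj⟩)),
          dist_inl_inr G hG hne]
    have hSeq : S = Sum.inl '' SL ∪ Sum.inr '' SR := by
      ext (x | x) <;> simp [hSL, hSR]
    have hdisj : Disjoint (Sum.inl '' SL : Set (V ⊕ V)) (Sum.inr '' SR) := by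
      rw [Set.disjoint_left]
      rintro x ⟨a, -, rfl⟩ ⟨b, -, hx⟩
      cases hx
    have h1 : S.ncard = SL.ncard + SR.ncard := by
      rw [hSeq, Set.ncard_union_eq hdisj,
        Set.ncard_image_of_injective _ Sum.inl_injective,
        Set.ncard_image_of_injective _ Sum.inr_injective]
    have h2 : (SL ∪ SR).ncard + (SL ∩ SR).ncard = SL.ncard + SR.ncard :=
      Set.ncard_union_add_ncard_inter SL SR
    have h3 : (SL ∪ SR).ncard ≤ Fintype.card V :=
      calc (SL ∪ SR).ncard ≤ (Set.univ : Set V).ncard :=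
            Set.ncard_le_ncard (Set.subset_univ _)
        _ = Fintype.card V := by rw [Set.ncard_univ, Nat.card_eq_fintype_card]
    have h4 : (SL ∩ SR).ncard ≤ 1 := by
      rw [Set.ncard_le_one]
      exact fun a ha b hb => hsub ha hb
    omega
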